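/- Let $\bm L^0 \in \mathbb{R}^{p\times d_0}$ with $\frac{1}{p}\bm L^{0\top}\bm L^0$ having smallest eigenvalue bounded below by $c_L > 0$, let $\bm F^0 \in \mathbb{R}^{n\times d_0}$ with $\frac{1}{n}\bm F^{0\top}\bm F^0$ having smallest eigenvalue bounded below by $c_F > 0$, and let $\bm H \in \mathbb{R}^{d_0\times d}$ with $d < d_0$. Then $\frac{1}{np}\mathrm{Tr}\big[(\bm L^{0\top}\bm L^0 - \bm L^{0\top}\bm L^0\bm H(\bm H^\top\bm L^{0\top}\bm L^0\bm H)^{-1}\bm H^\top\bm L^{0\top}\bm L^0)\,\bm F^{0\top}\bm F^0\big] \ge c_F\, c_L\,(d_0 - d) > 0$, provided $\bm H^\top\bm L^{0\top}\bm L^0\bm H$ is invertible. -/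

import Mathlib

open Matrix

variable {m : ℕ}

section
open scoped MatrixOrder
noncomputable def Matrix.PosSemidef.sqrt {A : Matrix (Fin m) (Fin m) ℝ} (_hA : A.PosSemidef) :
    Matrix (Fin m) (Fin m) ℝ := CFC.sqrt A
lemma Matrix.PosSemidef.sqrt_mul_self {A : Matrix (Fin m) (Fin m) ℝ} (hA : A.PosSemidef) :
    hA.sqrt * hA.sqrt = A :=
  CFC.sqrt_mul_sqrt_self A (nonneg_iff_posSemidef.mpr hA)
lemma Matrix.PosSemidef.posSemidef_sqrt {A : Matrix (Fin m) (Fin m) ℝ} (hA : A.PosSemidef) :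
    hA.sqrt.PosSemidef :=
  nonneg_iff_posSemidef.mp (CFC.sqrt_nonneg A)
end

lemma psd_smul {A : Matrix (Fin m) (Fin m) ℝ} (hA : A.PosSemidef) {c : ℝ} (hc : 0 ≤ c) :
    (c • A).PosSemidef := by
  exact hA.smul hc

lemma psd_trace_nonneg {A : Matrix (Fin m) (Fin m) ℝ} (hA : A.PosSemidef) : 0 ≤ A.trace := by
  exact hA.trace_nonneg

lemma psd_trace_mul_nonneg {A B : Matrix (Fin m) (Fin m) ℝ} (hA : A.PosSemidef)
    (hB : B.PosSemidef) : 0 ≤ (A * B).trace := by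
  have hS : hA.sqrt * hA.sqrt = A := hA.sqrt_mul_self
  have hPSD : (hA.sqrt * B * hA.sqrtᴴ).PosSemidef := hB.mul_mul_conjTranspose_same hA.sqrt
  have h1 : (hA.sqrt * B * hA.sqrtᴴ).trace = (A * B).trace := by
    rw [hA.posSemidef_sqrt.1, Matrix.trace_mul_cycle, Matrix.mul_assoc, ← Matrix.mul_assoc, hS]
  rw [← h1]
  exact psd_trace_nonneg hPSD

/-- Lemma A.4 lower bound: with `λ_min(LᵀL/p) ≥ c_L > 0`, `λ_min(FᵀF/n) ≥ c_F > 0`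
and `H : d₀×d`, `d < d₀`, the normalized trace of the Schur-type residual times `FᵀF`
is at least `c_F c_L (d₀ − d) > 0`. -/
theorem schur_residual_trace_lower_bound
    (n p d0 d : ℕ) (hn : 0 < n) (hp : 0 < p) (hd : d < d0)
    (L : Matrix (Fin p) (Fin d0) ℝ) (F : Matrix (Fin n) (Fin d0) ℝ)
    (H : Matrix (Fin d0) (Fin d) ℝ)
    (cL cF : ℝ) (hcL : 0 < cL) (hcF : 0 < cF)
    (hLeig : ((1 / (p : ℝ)) • (Lᵀ * L) - cL • (1 : Matrix (Fin d0) (Fin d0) ℝ)).PosSemidef)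
    (hFeig : ((1 / (n : ℝ)) • (Fᵀ * F) - cF • (1 : Matrix (Fin d0) (Fin d0) ℝ)).PosSemidef)
    (hInv : IsUnit (Hᵀ * (Lᵀ * L) * H)) :
    cF * cL * ((d0 : ℝ) - d) ≤
      (1 / ((n : ℝ) * p)) *
        Matrix.trace ((Lᵀ * L -
          (Lᵀ * L) * H * (Hᵀ * (Lᵀ * L) * H)⁻¹ * Hᵀ * (Lᵀ * L)) * (Fᵀ * F)) ∧
      0 < cF * cL * ((d0 : ℝ) - d) := by
  have hpR : (0:ℝ) < p := by exact_mod_cast hp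
  have hnR : (0:ℝ) < n := by exact_mod_cast hn
  obtain ⟨A, hAdef⟩ : ∃ X : Matrix (Fin d0) (Fin d0) ℝ, X = Lᵀ * L := ⟨_, rfl⟩
  obtain ⟨B, hBdef⟩ : ∃ X : Matrix (Fin d0) (Fin d0) ℝ, X = Fᵀ * F := ⟨_, rfl⟩
  rw [← hAdef] at hLeig hInv ⊢
  rw [← hBdef] at hFeig ⊢
  obtain ⟨M, hMdef⟩ : ∃ X : Matrix (Fin d) (Fin d) ℝ, X = Hᵀ * A * H := ⟨_, rfl⟩
  rw [← hMdef] at hInv ⊢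
  have hA : A.PosSemidef := by
    rw [hAdef, ← Matrix.conjTranspose_eq_transpose_of_trivial]
    exact Matrix.posSemidef_conjTranspose_mul_self L
  have hBpsd : B.PosSemidef := by
    rw [hBdef, ← Matrix.conjTranspose_eq_transpose_of_trivial]
    exact Matrix.posSemidef_conjTranspose_mul_self F
  have hAt : Aᵀ = A := by
    rw [hAdef]; simp [Matrix.transpose_mul, Matrix.mul_assoc]
  -- shifted PSD matrices
  have key2 : (A - ((p:ℝ) * cL) • 1).PosSemidef := by
    have := psd_smul hLeig (le_of_lt hpR)
    have e : (p:ℝ) • ((1 / (p : ℝ)) • A - cL • (1 : Matrix (Fin d0) (Fin d0) ℝ))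
        = A - ((p:ℝ) * cL) • 1 := by
      rw [smul_sub, smul_smul, smul_smul]
      congr 2
      field_simp
      rw [one_smul]
    rwa [e] at this
  have key1 : (B - ((n:ℝ) * cF) • 1).PosSemidef := by
    have := psd_smul hFeig (le_of_lt hnR)
    have e : (n:ℝ) • ((1 / (n : ℝ)) • B - cF • (1 : Matrix (Fin d0) (Fin d0) ℝ))
        = B - ((n:ℝ) * cF) • 1 := by
      rw [smul_sub, smul_smul, smul_smul]
      congr 2
      field_simp
      rw [one_smul]
    rwa [e] at this
  -- square root of A
  obtain ⟨S, hSdef⟩ : ∃ X : Matrix (Fin d0) (Fin d0) ℝ, X = hA.sqrt := ⟨_, rfl⟩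
  have hSS : S * S = A := by rw [hSdef]; exact hA.sqrt_mul_self
  have hSh : Sᵀ = S := by rw [hSdef]; exact hA.posSemidef_sqrt.1
  have hSSX : ∀ (k : ℕ) (X : Matrix (Fin d0) (Fin k) ℝ), S * (S * X) = A * X := by
    intro k X; rw [← Matrix.mul_assoc, hSS]
  have hMdet : IsUnit M.det := (Matrix.isUnit_iff_isUnit_det M).mp hInv
  have hMM' : M⁻¹ * M = 1 := Matrix.nonsing_inv_mul M hMdet
  have hMsymm : Mᵀ = M := by
    rw [hMdef]
    simp [Matrix.transpose_mul, hAt, Matrix.mul_assoc]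
  have hM'' : Hᵀ * (A * H) = M := by rw [hMdef, Matrix.mul_assoc]
  have hMX : ∀ (k : ℕ) (X : Matrix (Fin d) (Fin k) ℝ), Hᵀ * (A * (H * X)) = M * X := by
    intro k X
    rw [← hM'']
    simp only [Matrix.mul_assoc]
  obtain ⟨P, hPdef⟩ : ∃ X : Matrix (Fin d0) (Fin d0) ℝ, X = S * H * M⁻¹ * Hᵀ * S := ⟨_, rfl⟩
  have hPsymm : Pᵀ = P := by
    rw [hPdef]
    simp only [Matrix.transpose_mul, Matrix.transpose_transpose, hSh,
      Matrix.transpose_nonsing_inv, hMsymm]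
    simp only [Matrix.mul_assoc]
  have hPP : P * P = P := by
    rw [hPdef]
    simp only [Matrix.mul_assoc]
    rw [hSSX, hMX, ← Matrix.mul_assoc M⁻¹ M, hMM', Matrix.one_mul]
  have hIPpsd : (1 - P).PosSemidef := by
    have hch : (1 - P)ᴴ = 1 - P := by
      rw [Matrix.conjTranspose_eq_transpose_of_trivial, Matrix.transpose_sub, hPsymm,
        Matrix.transpose_one]
    have h1 : (1 - P)ᴴ * (1 - P) = 1 - P := by
      rw [hch, Matrix.sub_mul, Matrix.mul_sub, Matrix.mul_sub, hPP]
      simp only [Matrix.one_mul, Matrix.mul_one]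
      abel
    rw [← h1]
    exact Matrix.posSemidef_conjTranspose_mul_self (1 - P)
  obtain ⟨R, hRdef⟩ : ∃ X : Matrix (Fin d0) (Fin d0) ℝ,
      X = A - A * H * M⁻¹ * Hᵀ * A := ⟨_, rfl⟩
  have hRS : S * (1 - P) * S = R := by
    rw [hRdef, Matrix.mul_sub, Matrix.sub_mul, Matrix.mul_one, hSS, hPdef]
    congr 1
    simp only [Matrix.mul_assoc]
    rw [hSS, hSSX]
  have hRpsd : R.PosSemidef := by
    have := hIPpsd.mul_mul_conjTranspose_same S
    rw [Matrix.conjTranspose_eq_transpose_of_trivial, hSh, hRS] at this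
    exact this
  -- trace of P is d
  have htP : P.trace = (d : ℝ) := by
    rw [hPdef, Matrix.trace_mul_comm]
    simp only [Matrix.mul_assoc]
    rw [hSSX, ← Matrix.mul_assoc A H, Matrix.trace_mul_comm, Matrix.mul_assoc M⁻¹ Hᵀ,
      hM'', hMM', Matrix.trace_one]
    simp
  have htIP : (1 - P).trace = (d0 : ℝ) - d := by
    rw [Matrix.trace_sub, Matrix.trace_one, htP]; simp
  -- trace R ≥ p cL (d0 - d)
  have htR : (p : ℝ) * cL * ((d0:ℝ) - d) ≤ R.trace := by
    have h1 : R.trace = (A * (1 - P)).trace := by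
      rw [← hRS, Matrix.trace_mul_comm, ← Matrix.mul_assoc, hSS]
    have h2 : ((A - ((p:ℝ) * cL) • 1) * (1 - P)).trace
        = (A * (1 - P)).trace - (p:ℝ) * cL * ((d0:ℝ) - d) := by
      rw [Matrix.sub_mul, Matrix.trace_sub, Matrix.smul_mul, Matrix.one_mul,
        Matrix.trace_smul, htIP]
      simp [smul_eq_mul]
    have h3 : 0 ≤ ((A - ((p:ℝ) * cL) • 1) * (1 - P)).trace :=
      psd_trace_mul_nonneg key2 hIPpsd
    rw [h2] at h3
    linarith
  -- trace (R * B) ≥ n cF * trace R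
  have htRB : (n : ℝ) * cF * R.trace ≤ (R * B).trace := by
    have h2 : (R * (B - ((n:ℝ) * cF) • 1)).trace
        = (R * B).trace - (n:ℝ) * cF * R.trace := by
      rw [Matrix.mul_sub, Matrix.trace_sub, Matrix.mul_smul, Matrix.mul_one,
        Matrix.trace_smul]
      simp [smul_eq_mul]
    have h3 : 0 ≤ (R * (B - ((n:ℝ) * cF) • 1)).trace := psd_trace_mul_nonneg hRpsd key1
    rw [h2] at h3
    linarith
  have hfin : (n:ℝ) * cF * ((p:ℝ) * cL * ((d0:ℝ) - d)) ≤ (R * B).trace := by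
    have h4 : (n:ℝ) * cF * ((p:ℝ) * cL * ((d0:ℝ) - d)) ≤ (n:ℝ) * cF * R.trace := by
      apply mul_le_mul_of_nonneg_left htR
      positivity
    linarith
  have hdR : (0:ℝ) < (d0:ℝ) - d := by
    have : (d:ℝ) < d0 := by exact_mod_cast hd
    linarith
  refine ⟨?_, by positivity⟩
  have hgoalR : A - A * H * M⁻¹ * Hᵀ * A = R := hRdef.symm
  rw [hgoalR]
  rw [div_mul_eq_mul_div, one_mul, le_div_iff₀ (by positivity)]
  calc cF * cL * ((d0:ℝ) - d) * ((n:ℝ) * p)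
      = (n:ℝ) * cF * ((p:ℝ) * cL * ((d0:ℝ) - d)) := by ring
    _ ≤ (R * B).trace := hfin
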